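/- For every pair Q, P ∈ {0, …, K−1}, the inner product of μ_Q and ν_P satisfies ⟨μ_Q, ν_P⟩ = 1 − δ_{Q,P}; that is, ⟨μ_Q, ν_Q⟩ = 0 and ⟨μ_Q, ν_P⟩ = 1 whenever Q ≠ P. -/

import Mathlib

open scoped InnerProductSpace

/-- `θ = √(1/2 − √(K−1)/K)`. -/
noncomputable def theta (K : ℕ) : ℝ :=
  Real.sqrt (1 / 2 - Real.sqrt ((K : ℝ) - 1) / K)

/-- `μ_Q = √(2(K−1)/K) · ( −θ·e_Q + (√(1−θ²)/√(K−1)) · Σ_{P ≠ Q} e_P )` in `ℂ^K`. -/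
noncomputable def muVec (K : ℕ) (Q : Fin K) : EuclideanSpace ℂ (Fin K) :=
  ((Real.sqrt (2 * ((K : ℝ) - 1) / K) : ℝ) : ℂ) •
    (((-theta K : ℝ) : ℂ) • EuclideanSpace.single Q (1 : ℂ)
      + ((Real.sqrt (1 - theta K ^ 2) / Real.sqrt ((K : ℝ) - 1) : ℝ) : ℂ) •
        ∑ P ∈ Finset.univ.filter (fun P => P ≠ Q), EuclideanSpace.single P (1 : ℂ))

/-- `ν_Q = √(2(K−1)/K) · ( √(1−θ²)·e_Q + (θ/√(K−1)) · Σ_{P ≠ Q} e_P )` in `ℂ^K`. -/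
noncomputable def nuVec (K : ℕ) (Q : Fin K) : EuclideanSpace ℂ (Fin K) :=
  ((Real.sqrt (2 * ((K : ℝ) - 1) / K) : ℝ) : ℂ) •
    (((Real.sqrt (1 - theta K ^ 2) : ℝ) : ℂ) • EuclideanSpace.single Q (1 : ℂ)
      + ((theta K / Real.sqrt ((K : ℝ) - 1) : ℝ) : ℂ) •
        ∑ P ∈ Finset.univ.filter (fun P => P ≠ Q), EuclideanSpace.single P (1 : ℂ))

lemma keyC_ne (a b s c k : ℂ) (hs : s*s = k-1) (hab : a*b = (k-2)/(2*k))
    (hd : b^2 - a^2 = 2*s/k) (hc2 : c^2 = 2*(k-1)/k)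
    (hs0 : s ≠ 0) (hk0 : k ≠ 0) :
    c*(b*(c*(-a*0 + b/s*(1-0))) + a/s*(c*(-a*1+b/s*(k-1)) - c*(-a*0+b/s*(1-0)))) = 1 - 0 := by
  have hs2 : s^2 = k - 1 := by rw [pow_two, hs]
  have hk1 : k - 1 ≠ 0 := hs ▸ mul_ne_zero hs0 hs0
  have step : c*(b*(c*(-a*0 + b/s*(1-0))) + a/s*(c*(-a*1+b/s*(k-1)) - c*(-a*0+b/s*(1-0))))
      = c^2*(b^2-a^2)/s + c^2*(a*b)*(k-2)/s^2 := by ring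
  rw [step, hd, hab, hc2, hs2]
  have h1 : (2*(k-1)/k)*(2*s/k)/s = 4*(k-1)/k^2 := by field_simp; ring
  have h2 : (2*(k-1)/k)*((k-2)/(2*k))*(k-2)/(k-1) = (k-2)^2/k^2 := by field_simp
  rw [h1, h2]
  field_simp
  ring

lemma keyC_eq (a b s c k : ℂ) (hs : s*s = k-1) (hs0 : s ≠ 0) :
    c*(b*(c*(-a*1 + b/s*(1-1))) + a/s*(c*(-a*1+b/s*(k-1)) - c*(-a*1+b/s*(1-1)))) = 1 - 1 := by
  have hs2 : s^2 = k - 1 := by rw [pow_two, hs]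
  have hk1 : k - 1 ≠ 0 := hs ▸ mul_ne_zero hs0 hs0
  have step : c*(b*(c*(-a*1 + b/s*(1-1))) + a/s*(c*(-a*1+b/s*(k-1)) - c*(-a*1+b/s*(1-1))))
      = c^2*(a*b)*((k-1)/s^2 - 1) := by ring
  rw [step, hs2, div_self hk1]
  ring

set_option maxHeartbeats 1000000 in
/-- For every `Q, P ∈ {0, …, K−1}`, `⟨μ_Q, ν_P⟩ = 1 − δ_{Q,P}`: the inner product is `0`
when `Q = P` and `1` when `Q ≠ P`. -/
theorem stmt3 (K : ℕ) (hK : 2 ≤ K) (Q P : Fin K) :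
    ⟪muVec K Q, nuVec K P⟫_ℂ = 1 - if Q = P then 1 else 0 := by
  have hK2 : (2:ℝ) ≤ (K:ℝ) := by exact_mod_cast hK
  have hKpos : (0:ℝ) < K := by linarith
  have hs2 : Real.sqrt ((K:ℝ)-1) ^ 2 = (K:ℝ) - 1 := Real.sq_sqrt (by linarith)
  have hss : Real.sqrt ((K:ℝ)-1) * Real.sqrt ((K:ℝ)-1) = (K:ℝ) - 1 := by
    rw [← pow_two]; exact hs2
  have hspos : 0 < Real.sqrt ((K:ℝ)-1) := Real.sqrt_pos.mpr (by linarith)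
  have hsle : Real.sqrt ((K:ℝ)-1) ≤ (K:ℝ)/2 := by
    rw [show (K:ℝ)/2 = Real.sqrt (((K:ℝ)/2)^2) from (Real.sqrt_sq (by linarith)).symm]
    apply Real.sqrt_le_sqrt; nlinarith
  have hnn : (0:ℝ) ≤ 1/2 - Real.sqrt ((K:ℝ)-1) / K := by
    rw [sub_nonneg, div_le_div_iff₀ hKpos (by norm_num : (0:ℝ) < 2)]; linarith
  have ha2 : theta K ^ 2 = 1/2 - Real.sqrt ((K:ℝ)-1) / K := Real.sq_sqrt hnn
  have hb2 : Real.sqrt (1 - theta K ^ 2) ^ 2 = 1/2 + Real.sqrt ((K:ℝ)-1) / K := by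
    have hdivnn : (0:ℝ) ≤ Real.sqrt ((K:ℝ)-1) / K := by positivity
    rw [Real.sq_sqrt (by rw [ha2]; linarith), ha2]; ring
  have hd : Real.sqrt (1 - theta K ^ 2) ^ 2 - theta K ^ 2
      = 2 * Real.sqrt ((K:ℝ)-1) / K := by
    rw [hb2, ha2]; ring
  have hc2 : Real.sqrt (2 * ((K:ℝ)-1) / K) ^ 2 = 2 * ((K:ℝ)-1) / K :=
    Real.sq_sqrt (by apply div_nonneg (by linarith) (le_of_lt hKpos))
  have habnn : 0 ≤ theta K * Real.sqrt (1 - theta K ^ 2) :=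
    mul_nonneg (by rw [theta]; exact Real.sqrt_nonneg _) (Real.sqrt_nonneg _)
  have hab : theta K * Real.sqrt (1 - theta K ^ 2) = ((K:ℝ)-2)/(2*K) := by
    have h1 : (theta K * Real.sqrt (1 - theta K ^ 2))^2 = (((K:ℝ)-2)/(2*K))^2 := by
      rw [mul_pow, hb2, ha2]; field_simp; nlinarith [hs2]
    calc theta K * Real.sqrt (1 - theta K ^ 2)
        = Real.sqrt ((theta K * Real.sqrt (1 - theta K ^ 2))^2) := (Real.sqrt_sq habnn).symm
      _ = Real.sqrt ((((K:ℝ)-2)/(2*K))^2) := by rw [h1]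
      _ = ((K:ℝ)-2)/(2*K) := Real.sqrt_sq (div_nonneg (by linarith) (by linarith))
  -- complex versions
  have hsC : ((Real.sqrt ((K:ℝ)-1) : ℝ) : ℂ) * ((Real.sqrt ((K:ℝ)-1) : ℝ) : ℂ)
      = (K:ℂ) - 1 := by exact_mod_cast hss
  have habC : ((theta K : ℝ) : ℂ) * ((Real.sqrt (1 - theta K ^ 2) : ℝ) : ℂ)
      = ((K:ℂ)-2)/(2*(K:ℂ)) := by
    rw [← Complex.ofReal_mul, hab]; push_cast; ring
  have hdC : ((Real.sqrt (1 - theta K ^ 2) : ℝ) : ℂ)^2 - ((theta K : ℝ) : ℂ)^2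
      = 2 * ((Real.sqrt ((K:ℝ)-1) : ℝ) : ℂ) / (K:ℂ) := by exact_mod_cast hd
  have hc2C : ((Real.sqrt (2 * ((K:ℝ)-1) / K) : ℝ) : ℂ)^2 = 2*((K:ℂ)-1)/(K:ℂ) := by
    exact_mod_cast hc2
  have hs0C : ((Real.sqrt ((K:ℝ)-1) : ℝ) : ℂ) ≠ 0 :=
    Complex.ofReal_ne_zero.mpr (ne_of_gt hspos)
  have hk0C : (K:ℂ) ≠ 0 := Nat.cast_ne_zero.mpr (by omega)
  -- all-ones vector
  set w : EuclideanSpace ℂ (Fin K) := ∑ R : Fin K, EuclideanSpace.single R (1:ℂ) with hw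
  have hfilter : ∀ R : Fin K,
      (∑ S ∈ Finset.univ.filter (fun S => S ≠ R), EuclideanSpace.single S (1:ℂ))
        = w - EuclideanSpace.single R 1 := by
    intro R
    rw [eq_sub_iff_add_eq, hw, Finset.filter_ne', Finset.sum_erase_add _ _ (Finset.mem_univ R)]
  have hqq : ∀ A B : Fin K,
      ⟪EuclideanSpace.single A (1:ℂ), EuclideanSpace.single B (1:ℂ)⟫_ℂ
        = if A = B then 1 else 0 := by
    intro A B
    simp [EuclideanSpace.inner_single_left, EuclideanSpace.single_apply, eq_comm]
  have hqw : ∀ A : Fin K, ⟪EuclideanSpace.single A (1:ℂ), w⟫_ℂ = 1 := by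
    intro A
    simp [hw, inner_sum, hqq, Finset.sum_ite_eq, Finset.mem_univ]
  have hwq : ∀ A : Fin K, ⟪w, EuclideanSpace.single A (1:ℂ)⟫_ℂ = 1 := by
    intro A
    simp [hw, sum_inner, hqq, Finset.sum_ite_eq', Finset.mem_univ]
  have hww : ⟪w, w⟫_ℂ = (K:ℂ) := by
    rw [show ⟪w, w⟫_ℂ = ∑ R : Fin K, ⟪EuclideanSpace.single R (1:ℂ), w⟫_ℂ from by rw [hw, sum_inner]]
    simp [hqw]
  rw [muVec, nuVec, hfilter Q, hfilter P]
  simp only [inner_smul_left, inner_smul_right, inner_add_left, inner_add_right,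
    inner_sub_left, inner_sub_right, hqq, hqw, hwq, hww, map_neg, map_div₀, Complex.conj_ofReal,
    Complex.ofReal_neg, Complex.ofReal_div]
  split_ifs with h
  · exact keyC_eq ((theta K : ℝ) : ℂ) ((Real.sqrt (1 - theta K ^ 2) : ℝ) : ℂ)
      ((Real.sqrt ((K:ℝ)-1) : ℝ) : ℂ) ((Real.sqrt (2 * ((K:ℝ)-1) / K) : ℝ) : ℂ) (K:ℂ)
      hsC hs0C
  · exact keyC_ne ((theta K : ℝ) : ℂ) ((Real.sqrt (1 - theta K ^ 2) : ℝ) : ℂ)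
      ((Real.sqrt ((K:ℝ)-1) : ℝ) : ℂ) ((Real.sqrt (2 * ((K:ℝ)-1) / K) : ℝ) : ℂ) (K:ℂ)
      hsC habC hdC hc2C hs0C hk0C
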